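/- arXiv:1109.2157 — 4 statements merged into one kernel-verified Lean document; each statement's English description precedes it below -/
import Mathlib

section
/- Let F be a nonnegative Borel measure on ℝ^N. For any a > 0 and any t ∈ ℝ^N with ρ(0,t)·a ≤ 1/N, one has the truncation inequality ∫_{{λ : ρ(0,λ) ≤ a}} ⟨t,λ⟩² F(dλ) ≤ (24/11) ∫_{ℝ^N} (1 − cos⟨t,λ⟩) F(dλ). -/
open MeasureTheory Filter
open scoped ENNReal NNReal

noncomputable section

/-- `ℝ^n` with the Euclidean norm. -/
abbrev ESp (n : ℕ) := EuclideanSpace ℝ (Fin n)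

/-- The anisotropic metric `ρ(s,t) = ∑_j |s_j - t_j| ^ H_j`. -/
def rho {N : ℕ} (H : Fin N → ℝ) (s t : ESp N) : ℝ := ∑ j, |s j - t j| ^ (H j)

/-- `Q = ∑_j 1 / H_j`. -/
def Qof {N : ℕ} (H : Fin N → ℝ) : ℝ := ∑ j, (H j)⁻¹

/-- The cube `C(λ,h)` of side length `2h` centered at `λ`. -/
def cubeC {N : ℕ} (lam : ESp N) (h : ℝ) : Set (ESp N) := {x | ∀ j, |x j - lam j| ≤ h}

/-- The Euclidean inner product on `ℝ^N`. -/
def ip {N : ℕ} (s t : ESp N) : ℝ := ∑ j, s j * t j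

/-- The filter `‖λ‖ → ∞` on `ℝ^N`. -/
def atNormTop (N : ℕ) : Filter (ESp N) := Filter.comap (fun lam : ESp N => ‖lam‖) Filter.atTop

/-- An exponential sum `g(λ) = ∑_j a_j (e^{i⟨s^j,λ⟩} - 1)`. -/
def expSum {N n : ℕ} (a : Fin n → ℝ) (s : Fin n → ESp N) (lam : ESp N) : ℂ :=
  ∑ j, (a j : ℂ) * (Complex.exp (Complex.I * (ip (s j) lam : ℂ)) - 1)

/-- Helper: if `f 0 = 0` and `f` has nonneg derivative `f'` on `[0,∞)`, then `0 ≤ f x` for `x ≥ 0`. -/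
lemma aux_nonneg_of_deriv (f f' : ℝ → ℝ) (hd : ∀ x, HasDerivAt f (f' x) x)
    (h0 : f 0 = 0) (hf' : ∀ x, 0 ≤ x → 0 ≤ f' x) : ∀ x, 0 ≤ x → 0 ≤ f x := by
  intro x hx
  have hmono : MonotoneOn f (Set.Ici (0:ℝ)) := by
    apply monotoneOn_of_deriv_nonneg (convex_Ici 0)
    · exact (fun y _ => (hd y).differentiableAt.continuousAt.continuousWithinAt)
    · exact fun y hy => ((hd y).differentiableAt).differentiableWithinAt
    · intro y hy
      rw [(hd y).deriv]
      exact hf' y (le_of_lt (by simpa [interior_Ici] using hy))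
  have := hmono (Set.self_mem_Ici) (Set.mem_Ici.2 hx) hx
  simpa [h0] using this

lemma aux_sin_lb {x : ℝ} (hx : 0 ≤ x) : x - x ^ 3 / 6 ≤ Real.sin x := by
  have := aux_nonneg_of_deriv (fun y => Real.sin y - (y - y ^ 3 / 6))
    (fun y => Real.cos y - (1 - y ^ 2 / 2))
    (fun y => by
      have h1 : HasDerivAt (fun y : ℝ => y - y ^ 3 / 6) (1 - y ^ 2 / 2) y := by
        have := ((hasDerivAt_pow 3 y).div_const 6)
        have h := (hasDerivAt_id y).sub this
        exact h.congr_deriv (by ring)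
      exact (Real.hasDerivAt_sin y).sub h1)
    (by simp)
    (fun y _ => sub_nonneg.2 (Real.one_sub_sq_div_two_le_cos))
    x hx
  linarith [this]

lemma aux_cos_ub {x : ℝ} (hx : 0 ≤ x) : Real.cos x ≤ 1 - x ^ 2 / 2 + x ^ 4 / 24 := by
  have := aux_nonneg_of_deriv (fun y => 1 - y ^ 2 / 2 + y ^ 4 / 24 - Real.cos y)
    (fun y => Real.sin y - (y - y ^ 3 / 6))
    (fun y => by
      have h2 : HasDerivAt (fun y : ℝ => 1 - y ^ 2 / 2 + y ^ 4 / 24) (-(y) + y^3/6) y := by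
        have hp2 := ((hasDerivAt_pow 2 y).div_const 2)
        have hp4 := ((hasDerivAt_pow 4 y).div_const 24)
        have h := ((hasDerivAt_const y (1:ℝ)).sub hp2).add hp4
        exact h.congr_deriv (by ring)
      have := h2.sub (Real.hasDerivAt_cos y)
      exact this.congr_deriv (by ring))
    (by norm_num)
    (fun y hy => sub_nonneg.2 (aux_sin_lb hy))
    x hx
  linarith [this]

/-- key scalar inequality -/
lemma aux_key {x : ℝ} (hx : |x| ≤ 1) : x ^ 2 ≤ 24 / 11 * (1 - Real.cos x) := by
  have h1 : Real.cos x ≤ 1 - |x| ^ 2 / 2 + |x| ^ 4 / 24 := by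
    rw [← Real.cos_abs]
    exact aux_cos_ub (abs_nonneg x)
  have h2 : |x| ^ 2 = x ^ 2 := sq_abs x
  have h4 : |x| ^ 4 = x ^ 4 := by rw [show (4:ℕ) = 2*2 from rfl, pow_mul, pow_mul, sq_abs]
  have hx2 : x ^ 2 ≤ 1 := by nlinarith [abs_nonneg x, sq_abs x]
  nlinarith [h1]

/-- Lemma 3.5(i), truncation inequality: for `a > 0` and `ρ(0,t)·a ≤ 1/N`,
`∫_{ρ(0,λ) ≤ a} ⟨t,λ⟩² F(dλ) ≤ (24/11) ∫ (1 - cos⟨t,λ⟩) F(dλ)`. -/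
theorem truncation_inequality
    {N : ℕ} (hN : 0 < N) (H : Fin N → ℝ) (hH : ∀ j, H j ∈ Set.Ioo (0 : ℝ) 1)
    (F : Measure (ESp N)) (a : ℝ) (ha : 0 < a) (t : ESp N)
    (hta : rho H 0 t * a ≤ 1 / N) :
    ∫⁻ lam in {lam : ESp N | rho H 0 lam ≤ a}, ENNReal.ofReal (ip t lam ^ 2) ∂F ≤
      ENNReal.ofReal (24 / 11) *
        ∫⁻ lam, ENNReal.ofReal (1 - Real.cos (ip t lam)) ∂F := by
  have hN1 : (1 : ℝ) ≤ N := by exact_mod_cast hN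
  have hNpos : (0 : ℝ) < N := by positivity
  -- rho from 0 simplification
  have hrho0 : ∀ lam : ESp N, rho H 0 lam = ∑ j, |lam j| ^ (H j) := by
    intro lam
    simp [rho]
  -- bound on |ip t lam| for lam in the set
  have habs : ∀ lam : ESp N, rho H 0 lam ≤ a → |ip t lam| ≤ 1 := by
    intro lam hlam
    have hterm : ∀ j, |t j * lam j| ≤ 1 / N := by
      intro j
      have h0 : (0:ℝ) < H j := (hH j).1
      have h1' : H j < 1 := (hH j).2
      have htj : |t j| ^ (H j) ≤ 1 / (N * a) := by
        have hle : |t j| ^ (H j) ≤ rho H 0 t := by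
          rw [hrho0]
          exact Finset.single_le_sum (f := fun j => |t j| ^ (H j))
            (fun i _ => Real.rpow_nonneg (abs_nonneg _) _) (Finset.mem_univ j)
        have : rho H 0 t ≤ 1 / (N * a) := by
          rw [le_div_iff₀ (by positivity)]
          calc rho H 0 t * (N * a) = (rho H 0 t * a) * N := by ring
          _ ≤ (1 / N) * N := by
              apply mul_le_mul_of_nonneg_right hta hNpos.le
          _ = 1 := by field_simp
        linarith
      have hlj : |lam j| ^ (H j) ≤ a := by
        have hle : |lam j| ^ (H j) ≤ rho H 0 lam := by
          rw [hrho0]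
          exact Finset.single_le_sum (f := fun j => |lam j| ^ (H j))
            (fun i _ => Real.rpow_nonneg (abs_nonneg _) _) (Finset.mem_univ j)
        linarith
      set y : ℝ := |t j| * |lam j| with hy
      have hy0 : 0 ≤ y := mul_nonneg (abs_nonneg _) (abs_nonneg _)
      have hyh : y ^ (H j) ≤ 1 / N := by
        rw [hy, Real.mul_rpow (abs_nonneg _) (abs_nonneg _)]
        calc |t j| ^ H j * |lam j| ^ H j ≤ (1 / (N * a)) * a := by
              apply mul_le_mul htj hlj (Real.rpow_nonneg (abs_nonneg _) _) (by positivity)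
        _ = 1 / N := by field_simp
      have key : y ≤ 1 / N := by
        have h1 : y = (y ^ (H j)) ^ (H j)⁻¹ := (Real.rpow_rpow_inv hy0 (ne_of_gt h0)).symm
        have h2 : (y ^ (H j)) ^ (H j)⁻¹ ≤ (1 / N : ℝ) ^ (H j)⁻¹ :=
          Real.rpow_le_rpow (Real.rpow_nonneg hy0 _) hyh (by positivity)
        have h3 : (1 / N : ℝ) ^ (H j)⁻¹ ≤ (1 / N : ℝ) ^ (1:ℝ) := by
          apply Real.rpow_le_rpow_of_exponent_ge (by positivity)
          · exact div_le_one_of_le₀ hN1 hNpos.le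
          · exact (le_inv_comm₀ one_pos h0).2 (by simpa using h1'.le)
        rw [Real.rpow_one] at h3
        linarith [h1 ▸ h2.trans h3]
      calc |t j * lam j| = y := by rw [hy, abs_mul]
      _ ≤ 1 / N := key
    calc |ip t lam| ≤ ∑ j, |t j * lam j| := Finset.abs_sum_le_sum_abs _ _
    _ ≤ ∑ _j : Fin N, (1 / N : ℝ) := Finset.sum_le_sum fun j _ => hterm j
    _ = 1 := by
        rw [Finset.sum_const, Finset.card_univ, Fintype.card_fin, nsmul_eq_mul]
        field_simp
  -- measurability of the set
  have hcont : Continuous fun lam : ESp N => rho H 0 lam := by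
    simp only [hrho0]
    apply continuous_finset_sum
    intro j _
    have hpow : Continuous fun y : ℝ => |y| ^ (H j) := by
      apply continuous_iff_continuousAt.2
      intro y
      exact (Real.continuousAt_rpow_const _ _ (Or.inr (hH j).1.le)).comp
        continuous_abs.continuousAt
    exact hpow.comp ((continuous_apply j).comp (PiLp.continuous_ofLp 2 _))
  have hs : MeasurableSet {lam : ESp N | rho H 0 lam ≤ a} :=
    (isClosed_le hcont continuous_const).measurableSet
  calc ∫⁻ lam in {lam : ESp N | rho H 0 lam ≤ a}, ENNReal.ofReal (ip t lam ^ 2) ∂F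
      ≤ ∫⁻ lam in {lam : ESp N | rho H 0 lam ≤ a},
          ENNReal.ofReal (24 / 11) * ENNReal.ofReal (1 - Real.cos (ip t lam)) ∂F := by
        apply MeasureTheory.setLIntegral_mono' hs
        intro lam hlam
        rw [← ENNReal.ofReal_mul (by norm_num)]
        exact ENNReal.ofReal_le_ofReal (aux_key (habs lam hlam))
    _ ≤ ∫⁻ lam, ENNReal.ofReal (24 / 11) * ENNReal.ofReal (1 - Real.cos (ip t lam)) ∂F :=
        MeasureTheory.lintegral_mono' MeasureTheory.Measure.restrict_le_self le_rfl
    _ = ENNReal.ofReal (24 / 11) * ∫⁻ lam, ENNReal.ofReal (1 - Real.cos (ip t lam)) ∂F :=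
        MeasureTheory.lintegral_const_mul' _ _ ENNReal.ofReal_ne_top
end
end

section
/- Let F be a nonnegative Borel measure on ℝ^N and suppose there is a finite constant c₁ such that ∫_{ℝ^N} (1 − cos⟨t,λ⟩) F(dλ) ≤ c₁ ∑_{i=1}^N |t_i|^{2H_i} for all t ∈ [−1,1]^N. Then there exists a finite constant c₇ (depending only on N, H and c₁) such that for all a ≥ 1: F({λ ∈ ℝ^N : ρ(0,λ) > a}) ≤ c₇ a^{−2}. -/
open MeasureTheory Filter
open scoped ENNReal NNReal

noncomputable section

lemma quad_cos (θ : ℝ) (hθ : |θ| ≤ 2) : θ^2/4 ≤ 1 - Real.cos θ := by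
  rcases eq_or_ne θ 0 with h | h
  · simp [h]
  · have h1 : 0 < |θ| := abs_pos.mpr h
    set y := |θ| / 2 with hy
    have hy0 : 0 < y := by positivity
    have hy1 : y ≤ 1 := by rw [hy]; linarith
    have hs : y - y^3/4 < Real.sin y := by have := Real.sin_gt_sub_cube hy0; nlinarith [pow_pos hy0 3]
    have hcube : y^3 ≤ y := by nlinarith [sq_nonneg y, mul_pos hy0 hy0]
    have h34 : (3/4)*y ≤ Real.sin y := by linarith
    have hsq : (3/4*y)^2 ≤ Real.sin y ^ 2 := by nlinarith
    have habs : θ^2 = (2*y)^2 := by rw [hy, ← sq_abs θ]; ring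
    have hcos : Real.cos θ = Real.cos (2*y) := by
      rw [← Real.cos_abs]; congr 1; rw [hy]; ring
    rw [hcos, Real.cos_two_mul]
    have h2 := Real.sin_sq_add_cos_sq y
    nlinarith

lemma key_integral {x r cc : ℝ} (hr : 0 < r) (hc : 0 < cc) (hc1 : cc ≤ 1)
    (hrx : cc ≤ r * |x|) : r * (cc^2/12) ≤ ∫ u in (0:ℝ)..r, (1 - Real.cos (u*x)) := by
  have hx : x ≠ 0 := by
    rintro rfl
    simp at hrx
    linarith
  have hcont : Continuous fun u : ℝ => 1 - Real.cos (u * x) :=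
    continuous_const.sub (Real.continuous_cos.comp (continuous_id.mul continuous_const))
  rcases le_or_gt (r*|x|) 2 with hcase | hcase
  · have hmono : ∀ u ∈ Set.Icc (0:ℝ) r, (u*x)^2/4 ≤ 1 - Real.cos (u*x) := by
      intro u hu
      apply quad_cos
      rw [abs_mul, abs_of_nonneg hu.1]
      calc u * |x| ≤ r * |x| := by
            apply mul_le_mul_of_nonneg_right hu.2 (abs_nonneg x)
        _ ≤ 2 := hcase
    have hint : ∫ u in (0:ℝ)..r, (u*x)^2/4 ≤ ∫ u in (0:ℝ)..r, (1 - Real.cos (u*x)) :=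
      intervalIntegral.integral_mono_on hr.le
        ((Continuous.intervalIntegrable (by continuity) 0 r)) (hcont.intervalIntegrable 0 r) hmono
    have hval : ∫ u in (0:ℝ)..r, (u*x)^2/4 = x^2/4 * (r^3/3) := by
      have heq : (fun u : ℝ => (u*x)^2/4) = fun u : ℝ => (x^2/4) * u^2 := by
        funext u; ring
      rw [heq, intervalIntegral.integral_const_mul, integral_pow]
      norm_num
    rw [hval] at hint
    have : cc^2 ≤ (r*|x|)^2 := by nlinarith [abs_nonneg x]
    have hxx : (r*|x|)^2 = r^2 * x^2 := by rw [mul_pow, sq_abs]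
    nlinarith [hr, sq_nonneg x]
  · have hcos_int : ∫ u in (0:ℝ)..r, Real.cos (u * x) = Real.sin (r*x)/x := by
      have h := intervalIntegral.integral_comp_mul_right (a := (0:ℝ)) (b := r) Real.cos hx
      rw [h]
      simp [integral_cos, div_eq_inv_mul]
    have hI : ∫ u in (0:ℝ)..r, (1 - Real.cos (u*x)) = r - Real.sin (r*x)/x := by
      have hcos_cont : Continuous fun u : ℝ => Real.cos (u * x) := by continuity
      rw [intervalIntegral.integral_sub (intervalIntegrable_const)
        (hcos_cont.intervalIntegrable _ _), hcos_int]
      simp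
    rw [hI]
    have habs : 0 < |x| := abs_pos.mpr hx
    have h1 : Real.sin (r*x)/x ≤ 1/|x| := by
      calc Real.sin (r*x)/x ≤ |Real.sin (r*x)/x| := le_abs_self _
        _ = |Real.sin (r*x)|/|x| := abs_div _ _
        _ ≤ 1/|x| := by gcongr; exact Real.abs_sin_le_one _
    have h2 : 1/|x| ≤ r/2 := by
      rw [div_le_div_iff₀ habs two_pos]
      nlinarith
    have hcc2 : cc^2 ≤ 1 := by nlinarith
    nlinarith


/-- Lemma 3.5(ii), tail estimate: if `∫ (1 - cos⟨t,λ⟩) F(dλ) ≤ c₁ ∑ |t_i|^{2H_i}` for all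
`t ∈ [-1,1]^N`, then `F{λ : ρ(0,λ) > a} ≤ c₇ a⁻²` for all `a ≥ 1`. -/
theorem spectral_tail_estimate
    {N : ℕ} (hN : 0 < N) (H : Fin N → ℝ) (hH : ∀ j, H j ∈ Set.Ioo (0 : ℝ) 1)
    (c₁ : ℝ) (hc₁ : 0 ≤ c₁) :
    ∃ c₇ : ℝ, 0 < c₇ ∧
      ∀ F : Measure (ESp N),
        (∀ t : ESp N, (∀ j, t j ∈ Set.Icc (-1 : ℝ) 1) →
          ∫⁻ lam, ENNReal.ofReal (1 - Real.cos (ip t lam)) ∂F ≤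
            ENNReal.ofReal (c₁ * ∑ i, |t i| ^ (2 * H i))) →
        ∀ a : ℝ, 1 ≤ a →
          F {lam : ESp N | a < rho H 0 lam} ≤ ENNReal.ofReal (c₇ / a ^ 2) := by
  have hNR : (1:ℝ) ≤ (N:ℝ) := by exact_mod_cast hN
  have hN0 : (0:ℝ) < (N:ℝ) := by linarith
  have hne : (Finset.univ : Finset (Fin N)).Nonempty := ⟨⟨0, hN⟩, Finset.mem_univ _⟩
  set cc : ℝ := Finset.univ.inf' hne (fun j => (N:ℝ) ^ (-(H j)⁻¹)) with hccdef
  have hccpos : 0 < cc := by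
    rw [hccdef, Finset.lt_inf'_iff]
    intro j _
    exact Real.rpow_pos_of_pos hN0 _
  have hcc1 : cc ≤ 1 := by
    refine le_trans (Finset.inf'_le _ (Finset.mem_univ ⟨0, hN⟩)) ?_
    exact Real.rpow_le_one_of_one_le_of_nonpos hNR
      (neg_nonpos.mpr (inv_nonneg.mpr (hH ⟨0, hN⟩).1.le))
  refine ⟨12 * N * (c₁ + 1) / cc^2, by positivity, ?_⟩
  intro F hF a ha
  have ha0 : (0:ℝ) < a := lt_of_lt_of_le one_pos ha
  set r : Fin N → ℝ := fun j => a ^ (-(H j)⁻¹) with hrdef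
  have hr0 : ∀ j, 0 < r j := fun j => Real.rpow_pos_of_pos ha0 _
  have hr1 : ∀ j, r j ≤ 1 := fun j =>
    Real.rpow_le_one_of_one_le_of_nonpos ha (neg_nonpos.mpr (inv_nonneg.mpr (hH j).1.le))
  set S : Fin N → Set (ESp N) := fun j => {lam : ESp N | cc < r j * |lam j|} with hSdef
  have hmj : ∀ j, Measurable fun lam : ESp N => lam j := fun j => by fun_prop
  have hSmeas : ∀ j, MeasurableSet (S j) :=
    fun j => measurableSet_lt measurable_const (measurable_const.mul (hmj j).abs)
  -- tail set is covered by the S j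
  have hsub : {lam : ESp N | a < rho H 0 lam} ⊆ ⋃ j, S j := by
    intro lam hlam
    simp only [Set.mem_setOf_eq] at hlam
    have hrho : rho H 0 lam = ∑ i, |lam i| ^ (H i) := by
      unfold rho
      refine Finset.sum_congr rfl fun i _ => ?_
      rw [PiLp.zero_apply, zero_sub, abs_neg]
    rw [hrho] at hlam
    have hex : ∃ i, a / N < |lam i| ^ (H i) := by
      by_contra hcon
      push_neg at hcon
      have hsum : ∑ i, |lam i| ^ (H i) ≤ ∑ _i : Fin N, a / N :=
        Finset.sum_le_sum fun i _ => hcon i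
      rw [Finset.sum_const, Finset.card_univ, Fintype.card_fin, nsmul_eq_mul] at hsum
      have hNa : (N:ℝ) * (a / N) = a := by field_simp
      linarith
    obtain ⟨i, hi⟩ := hex
    refine Set.mem_iUnion.mpr ⟨i, ?_⟩
    simp only [hSdef, Set.mem_setOf_eq]
    have hHi := hH i
    have hpow : (a / N) ^ (H i)⁻¹ < |lam i| := by
      have h1 : (a/N) ^ (H i)⁻¹ < (|lam i| ^ (H i)) ^ (H i)⁻¹ :=
        Real.rpow_lt_rpow (div_nonneg ha0.le hN0.le) hi (by have := (hH i).1; positivity)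
      rwa [← Real.rpow_mul (abs_nonneg _), mul_inv_cancel₀ hHi.1.ne', Real.rpow_one] at h1
    have ha' : a ^ (H i)⁻¹ ≠ 0 := (Real.rpow_pos_of_pos ha0 _).ne'
    have hn' : (N:ℝ) ^ (H i)⁻¹ ≠ 0 := (Real.rpow_pos_of_pos hN0 _).ne'
    have h3 : r i * (a/N) ^ (H i)⁻¹ = (N:ℝ) ^ (-(H i)⁻¹) := by
      simp only [hrdef]
      rw [Real.div_rpow ha0.le hN0.le, Real.rpow_neg ha0.le, Real.rpow_neg hN0.le]
      field_simp
    have h4 : cc ≤ (N:ℝ) ^ (-(H i)⁻¹) := Finset.inf'_le _ (Finset.mem_univ i)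
    calc cc ≤ r i * (a/N) ^ (H i)⁻¹ := by rw [h3]; exact h4
      _ < r i * |lam i| := mul_lt_mul_of_pos_left hpow (hr0 i)
  set B : ℝ := (c₁+1) * (12/cc^2) / a^2 with hBdef
  have hSbound : ∀ j, F (S j) ≤ ENNReal.ofReal B := by
    intro j
    have hHj0 : 0 < H j := (hH j).1
    -- specialization of the hypothesis to single-coordinate t
    have hyp_u : ∀ u : ℝ, 0 < u → u ≤ 1 →
        ∫⁻ lam, ENNReal.ofReal (1 - Real.cos (u * lam j)) ∂F ≤
          ENNReal.ofReal (c₁ * u ^ (2 * H j)) := by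
      intro u hu0 hu1
      set t : ESp N := EuclideanSpace.single j u with ht
      have htmem : ∀ i, t i ∈ Set.Icc (-1:ℝ) 1 := by
        intro i
        rw [ht, EuclideanSpace.single_apply]
        split_ifs
        · constructor <;> linarith
        · constructor <;> norm_num
      have hip : ∀ lam : ESp N, ip t lam = u * lam j := by
        intro lam
        unfold ip
        rw [Finset.sum_eq_single j]
        · rw [ht, EuclideanSpace.single_apply, if_pos rfl]
        · intro i _ hij
          rw [ht, EuclideanSpace.single_apply, if_neg hij, zero_mul]
        · intro hj; exact absurd (Finset.mem_univ j) hj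
      have hsum : ∑ i, |t i| ^ (2 * H i) = u ^ (2 * H j) := by
        rw [Finset.sum_eq_single j]
        · rw [ht, EuclideanSpace.single_apply, if_pos rfl, abs_of_pos hu0]
        · intro i _ hij
          rw [ht, EuclideanSpace.single_apply, if_neg hij, abs_zero]
          exact Real.zero_rpow (by have := (hH i).1; positivity : (0:ℝ) < 2 * H i).ne'
        · intro hj; exact absurd (Finset.mem_univ j) hj
      have h := hF t htmem
      rw [hsum] at h
      calc ∫⁻ lam, ENNReal.ofReal (1 - Real.cos (u * lam j)) ∂F
          = ∫⁻ lam, ENNReal.ofReal (1 - Real.cos (ip t lam)) ∂F := by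
            apply lintegral_congr
            intro lam
            rw [hip]
        _ ≤ _ := h
    have hru : ∀ u : ℝ, u ∈ Set.Ioc (0:ℝ) (r j) →
        ∫⁻ lam, ENNReal.ofReal (1 - Real.cos (u * lam j)) ∂F ≤
          ENNReal.ofReal (c₁ * (a^2)⁻¹) := by
      intro u hu
      refine le_trans (hyp_u u hu.1 (hu.2.trans (hr1 j))) (ENNReal.ofReal_le_ofReal ?_)
      refine mul_le_mul_of_nonneg_left ?_ hc₁
      have h1 : u ^ (2*H j) ≤ (r j) ^ (2*H j) := Real.rpow_le_rpow hu.1.le hu.2 (by positivity)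
      have h2 : (r j) ^ (2*H j) = (a^2)⁻¹ := by
        simp only [hrdef]
        rw [← Real.rpow_mul ha0.le]
        have hexp : -(H j)⁻¹ * (2 * H j) = -2 := by field_simp
        rw [hexp, Real.rpow_neg ha0.le]
        congr 1
        rw [show (2:ℝ) = ((2:ℕ):ℝ) by norm_num, Real.rpow_natCast]
      rw [← h2]; exact h1
    -- sigma-finiteness of the restriction to U = {lam j ≠ 0}
    set U : Set (ESp N) := {lam : ESp N | lam j ≠ 0} with hUdef
    have hZmeas : MeasurableSet {lam : ESp N | lam j = 0} := hmj j (measurableSet_singleton 0)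
    have hUmeas : MeasurableSet U := hZmeas.compl
    set A : ℕ × ℕ → Set (ESp N) :=
      fun p => {lam : ESp N | (1:ℝ)/(p.2+1) ≤ 1 - Real.cos ((1/(p.1+1)) * lam j)} with hAdef
    haveI hsf : SigmaFinite (F.restrict U) := by
      apply MeasureTheory.Measure.sigmaFinite_of_countable
        (S := Set.range A ∪ {{lam : ESp N | lam j = 0}})
      · exact (Set.countable_range A).union (Set.countable_singleton _)
      · rintro s (⟨p, rfl⟩ | hs)
        · have hu0 : (0:ℝ) < 1/((p.1:ℝ)+1) := by positivity
          have hu1 : (1:ℝ)/((p.1:ℝ)+1) ≤ 1 := by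
            rw [div_le_one (by positivity)]
            simp [Nat.cast_nonneg]
          have hε0 : ENNReal.ofReal ((1:ℝ)/((p.2:ℝ)+1)) ≠ 0 :=
            (ENNReal.ofReal_pos.mpr (by positivity)).ne'
          have hfm : Measurable fun lam : ESp N =>
              ENNReal.ofReal (1 - Real.cos ((1/((p.1:ℝ)+1)) * lam j)) :=
            ENNReal.measurable_ofReal.comp (measurable_const.sub
              (Real.measurable_cos.comp (measurable_const.mul (hmj j))))
          have hm : ENNReal.ofReal ((1:ℝ)/((p.2:ℝ)+1)) * F.restrict U (A p) ≤
              ENNReal.ofReal (c₁ * (1/((p.1:ℝ)+1)) ^ (2*H j)) := by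
            calc ENNReal.ofReal ((1:ℝ)/((p.2:ℝ)+1)) * F.restrict U (A p)
                ≤ ENNReal.ofReal ((1:ℝ)/((p.2:ℝ)+1)) *
                  F {lam : ESp N | ENNReal.ofReal ((1:ℝ)/((p.2:ℝ)+1)) ≤
                    ENNReal.ofReal (1 - Real.cos ((1/((p.1:ℝ)+1)) * lam j))} := by
                  refine mul_le_mul_right (le_trans (Measure.le_iff'.mp Measure.restrict_le_self _) ?_) _
                  refine measure_mono ?_
                  intro lam hlam
                  simp only [hAdef, Set.mem_setOf_eq] at hlam ⊢
                  exact ENNReal.ofReal_le_ofReal hlam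
              _ ≤ ∫⁻ lam, ENNReal.ofReal (1 - Real.cos ((1/((p.1:ℝ)+1)) * lam j)) ∂F :=
                  mul_meas_ge_le_lintegral₀ hfm.aemeasurable _
              _ ≤ _ := hyp_u _ hu0 hu1
          rcases eq_top_or_lt_top (F.restrict U (A p)) with htop | h
          · rw [htop, ENNReal.mul_top hε0, top_le_iff] at hm
            exact absurd hm ENNReal.ofReal_ne_top
          · exact h
        · have hs' : s = {lam : ESp N | lam j = 0} := by simpa using hs
          subst hs'
          rw [Measure.restrict_apply hZmeas]
          have : {lam : ESp N | lam j = 0} ∩ U = ∅ := by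
            ext lam
            simp only [hUdef, Set.mem_inter_iff, Set.mem_setOf_eq, Set.mem_empty_iff_false]
            tauto
          rw [this]
          simp
      · apply Set.eq_univ_iff_forall.mpr
        intro lam
        rcases eq_or_ne (lam j) 0 with h0 | h0
        · exact Set.mem_sUnion.mpr ⟨{lam : ESp N | lam j = 0}, Or.inr rfl, h0⟩
        · obtain ⟨k, hk⟩ := exists_nat_ge (|lam j| / 2)
          have hk2 : |lam j| ≤ 2*((k:ℝ)+1) := by linarith
          set u : ℝ := 1/((k:ℝ)+1) with hu
          have hup : 0 < u := by positivity
          have hθabs : |u * lam j| ≤ 2 := by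
            rw [abs_mul, abs_of_pos hup]
            rw [hu, div_mul_eq_mul_div, div_le_iff₀ (by positivity)]
            linarith
          have hθne : u * lam j ≠ 0 := mul_ne_zero hup.ne' h0
          have hq := quad_cos _ hθabs
          have hpos : 0 < (u*lam j)^2/4 := by positivity
          obtain ⟨m, hm⟩ := exists_nat_one_div_lt hpos
          refine Set.mem_sUnion.mpr ⟨A (k, m), Or.inl ⟨(k,m), rfl⟩, ?_⟩
          simp only [hAdef, Set.mem_setOf_eq]
          calc (1:ℝ)/((m:ℝ)+1) ≤ (u*lam j)^2/4 := hm.le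
            _ ≤ 1 - Real.cos (u * lam j) := hq
    -- Tonelli and the two-sided estimate
    set F' := F.restrict U with hF'def
    have hfm2 : Measurable (Function.uncurry fun (u:ℝ) (lam : ESp N) =>
        ENNReal.ofReal (1 - Real.cos (u * lam j))) := by
      apply ENNReal.measurable_ofReal.comp
      exact measurable_const.sub
        (Real.measurable_cos.comp (measurable_fst.mul ((hmj j).comp measurable_snd)))
    have hswap := lintegral_lintegral_swap
      (μ := volume.restrict (Set.Ioc 0 (r j))) (ν := F') hfm2.aemeasurable
    have hupper : ∫⁻ lam, (∫⁻ u in Set.Ioc 0 (r j),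
        ENNReal.ofReal (1 - Real.cos (u * lam j))) ∂F' ≤
        ENNReal.ofReal (c₁ * (a^2)⁻¹) * ENNReal.ofReal (r j) := by
      refine le_trans (le_of_eq hswap.symm) ?_
      calc ∫⁻ u in Set.Ioc 0 (r j),
          (∫⁻ lam, ENNReal.ofReal (1 - Real.cos (u * lam j)) ∂F')
          ≤ ∫⁻ _u in Set.Ioc 0 (r j), ENNReal.ofReal (c₁ * (a^2)⁻¹) := by
            refine setLIntegral_mono' measurableSet_Ioc fun u hu => ?_
            exact le_trans (lintegral_mono' Measure.restrict_le_self le_rfl) (hru u hu)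
        _ = ENNReal.ofReal (c₁ * (a^2)⁻¹) * volume (Set.Ioc 0 (r j)) :=
            setLIntegral_const _ _
        _ = _ := by rw [Real.volume_Ioc, sub_zero]
    have hlower : ENNReal.ofReal (r j * (cc^2/12)) * F' (S j) ≤
        ∫⁻ lam, (∫⁻ u in Set.Ioc 0 (r j),
          ENNReal.ofReal (1 - Real.cos (u * lam j))) ∂F' := by
      have hSin : ∀ lam ∈ S j, ENNReal.ofReal (r j * (cc^2/12)) ≤
          ∫⁻ u in Set.Ioc 0 (r j), ENNReal.ofReal (1 - Real.cos (u * lam j)) := by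
        intro lam hlam
        have hcont : Continuous fun u : ℝ => 1 - Real.cos (u * lam j) :=
          continuous_const.sub (Real.continuous_cos.comp (continuous_id.mul continuous_const))
        have hint : IntegrableOn (fun u : ℝ => 1 - Real.cos (u * lam j))
            (Set.Ioc 0 (r j)) volume := hcont.integrableOn_Ioc
        have heq := ofReal_integral_eq_lintegral_ofReal hint
          (Filter.Eventually.of_forall fun u => by simp only [Pi.zero_apply]; nlinarith [Real.cos_le_one (u * lam j)])
        rw [← heq]
        apply ENNReal.ofReal_le_ofReal
        rw [← intervalIntegral.integral_of_le (hr0 j).le]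
        simp only [hSdef, Set.mem_setOf_eq] at hlam
        exact key_integral (hr0 j) hccpos hcc1 hlam.le
      calc ENNReal.ofReal (r j * (cc^2/12)) * F' (S j)
          = ∫⁻ _lam in S j, ENNReal.ofReal (r j * (cc^2/12)) ∂F' :=
            (setLIntegral_const _ _).symm
        _ ≤ ∫⁻ lam in S j, (∫⁻ u in Set.Ioc 0 (r j),
              ENNReal.ofReal (1 - Real.cos (u * lam j))) ∂F' :=
            setLIntegral_mono' (hSmeas j) hSin
        _ ≤ _ := setLIntegral_le_lintegral _ _
    have hFS : F' (S j) = F (S j) := by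
      rw [hF'def, Measure.restrict_apply (hSmeas j)]
      congr 1
      apply Set.inter_eq_self_of_subset_left
      intro lam hlam
      simp only [hSdef, Set.mem_setOf_eq] at hlam
      simp only [hUdef, Set.mem_setOf_eq]
      intro h0
      rw [h0] at hlam
      simp at hlam
      linarith
    have hcomb : ENNReal.ofReal (r j * (cc^2/12)) * F (S j) ≤
        ENNReal.ofReal (c₁ * (a^2)⁻¹) * ENNReal.ofReal (r j) := by
      rw [← hFS]; exact le_trans hlower hupper
    have hq0 : ENNReal.ofReal (r j * (cc^2/12)) ≠ 0 :=
      (ENNReal.ofReal_pos.mpr (by positivity)).ne'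
    have hqt : ENNReal.ofReal (r j * (cc^2/12)) ≠ ⊤ := ENNReal.ofReal_ne_top
    have hdiv : F (S j) ≤ ENNReal.ofReal (c₁ * (a^2)⁻¹) * ENNReal.ofReal (r j) /
        ENNReal.ofReal (r j * (cc^2/12)) := by
      rw [ENNReal.le_div_iff_mul_le (Or.inl hq0) (Or.inl hqt), mul_comm]
      exact hcomb
    refine le_trans hdiv ?_
    rw [← ENNReal.ofReal_mul (mul_nonneg hc₁ (by positivity)),
      ← ENNReal.ofReal_div_of_pos (by positivity)]
    apply ENNReal.ofReal_le_ofReal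
    have hrne : r j ≠ 0 := (hr0 j).ne'
    have hccne : cc ≠ 0 := hccpos.ne'
    have hane : a ≠ 0 := ha0.ne'
    have heq : c₁ * (a^2)⁻¹ * r j / (r j * (cc^2/12)) = c₁ * (12/cc^2) / a^2 := by
      field_simp
    rw [heq, hBdef]
    gcongr
    linarith
  calc F {lam : ESp N | a < rho H 0 lam} ≤ F (⋃ j, S j) := measure_mono hsub
    _ ≤ ∑' j, F (S j) := measure_iUnion_le _
    _ ≤ ∑' _j : Fin N, ENNReal.ofReal B := ENNReal.tsum_le_tsum hSbound
    _ = (N : ℝ≥0∞) * ENNReal.ofReal B := by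
        rw [tsum_fintype]
        simp [Finset.sum_const, Finset.card_univ, nsmul_eq_mul]
    _ ≤ ENNReal.ofReal (12 * N * (c₁ + 1) / cc^2 / a^2) := by
        rw [← ENNReal.ofReal_natCast N, ← ENNReal.ofReal_mul (by positivity)]
        apply ENNReal.ofReal_le_ofReal
        rw [hBdef]
        apply le_of_eq
        ring
end
end

section
/- Let δ > 0 and let φ : (0,δ) → (0,1) be right continuous and monotone increasing with φ(0+) = 0, and suppose there is a finite constant c₁ > 0 such that φ(2s) ≤ c₁ φ(s) for all 0 < s < δ/2. Then there exists a positive constant c₂ (depending only on c₁) such that for every Borel measure μ on ℝ^d, every Borel set E ⊆ ℝ^d, and every K > 0: if limsup_{r→0} μ(B(x,r))/φ(2r) ≤ K for every x ∈ E, then φ-m(E) ≥ c₂ μ(E)/K. -/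
open MeasureTheory Filter Set
open scoped ENNReal NNReal

noncomputable section

/-- Rogers–Taylor upper density theorem (Lemma 3.1): for every doubling constant `c₁` there
is `c₂ > 0` such that for every gauge `φ` (right-continuous, increasing, `φ(0+) = 0`,
`(0,1)`-valued and `c₁`-doubling on `(0,δ)`), every Borel measure `μ` on `ℝ^d`, every Borel
set `E` and every `K > 0`: if the upper `φ`-density of `μ` at each `x ∈ E` is at most `K`,
then `φ-m(E) ≥ c₂ μ(E) / K`. -/
theorem rogers_taylor_density_theorem
    {d : ℕ} (hd : 0 < d) (c₁ : ℝ) (hc₁ : 0 < c₁) :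
    ∃ c₂ : ℝ, 0 < c₂ ∧
      ∀ (δ : ℝ), 0 < δ → ∀ φ : ℝ → ℝ,
        (∀ s, 0 < s → s < δ → φ s ∈ Set.Ioo (0 : ℝ) 1) →
        (∀ s t : ℝ, 0 < s → s ≤ t → t < δ → φ s ≤ φ t) →
        (∀ s, 0 < s → s < δ → ContinuousWithinAt φ (Set.Ici s) s) →
        Filter.Tendsto φ (nhdsWithin 0 (Set.Ioi 0)) (nhds 0) →
        (∀ s, 0 < s → s < δ / 2 → φ (2 * s) ≤ c₁ * φ s) →
        ∀ (μ : Measure (EuclideanSpace ℝ (Fin d))) (E : Set (EuclideanSpace ℝ (Fin d))),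
          MeasurableSet E → ∀ K : ℝ, 0 < K →
          (∀ x ∈ E, Filter.limsup
              (fun r : ℝ => μ (Metric.ball x r) / ENNReal.ofReal (φ (2 * r)))
              (nhdsWithin 0 (Set.Ioi 0)) ≤ ENNReal.ofReal K) →
          ENNReal.ofReal (c₂ / K) * μ E ≤
            Measure.mkMetric (fun r : ℝ≥0∞ => ENNReal.ofReal (φ r.toReal)) E := by
  refine ⟨1 / (2 * c₁ ^ 2), by positivity, ?_⟩
  intro δ hδ φ hφmem hφmono hφrc hφ0 hφdoub μ E hE K hK hlim
  set m : ℝ≥0∞ → ℝ≥0∞ := fun r => ENNReal.ofReal (φ r.toReal) with hm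
  set c₂ : ℝ := 1 / (2 * c₁ ^ 2) with hc₂
  -- the good sets
  set En : ℕ → Set (EuclideanSpace ℝ (Fin d)) := fun n =>
    {x ∈ E | ∀ r : ℝ, 0 < r → r ≤ 1 / (n + 1) →
      μ (Metric.ball x r) ≤ ENNReal.ofReal (2 * K) * ENNReal.ofReal (φ (2 * r))} with hEn
  have hEnE : ∀ n, En n ⊆ E := fun n x hx => hx.1
  have hmono : Monotone En := by
    intro a b hab x hx
    refine ⟨hx.1, fun r hr hr' => hx.2 r hr (hr'.trans ?_)⟩
    have : (a : ℝ) + 1 ≤ b + 1 := by exact_mod_cast Nat.add_le_add_right hab 1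
    exact one_div_le_one_div_of_le (by positivity) this
  -- E ⊆ ⋃ En
  have hEsub : E ⊆ ⋃ n, En n := by
    intro x hx
    have h2K : ENNReal.ofReal K < ENNReal.ofReal (2 * K) := by
      rw [ENNReal.ofReal_lt_ofReal_iff (by positivity)]; linarith
    have hev : ∀ᶠ r in nhdsWithin (0:ℝ) (Set.Ioi 0),
        μ (Metric.ball x r) / ENNReal.ofReal (φ (2 * r)) < ENNReal.ofReal (2 * K) :=
      eventually_lt_of_limsup_lt (lt_of_le_of_lt (hlim x hx) h2K)
    rcases mem_nhdsGT_iff_exists_Ioo_subset.1 hev with ⟨u, hu, hIoo⟩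
    obtain ⟨n, hn⟩ := exists_nat_one_div_lt (lt_min (mem_Ioi.1 hu) (half_pos hδ))
    refine mem_iUnion.2 ⟨n, hx, fun r hr hr' => ?_⟩
    have hru : r < u := lt_of_le_of_lt hr' (hn.trans_le (min_le_left _ _))
    have hrδ : 2 * r < δ := by
      have : r < δ / 2 := lt_of_le_of_lt hr' (hn.trans_le (min_le_right _ _))
      linarith
    have hφpos : 0 < φ (2 * r) := (hφmem _ (by linarith) hrδ).1
    have hdiv : μ (Metric.ball x r) / ENNReal.ofReal (φ (2 * r)) < ENNReal.ofReal (2 * K) :=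
      hIoo ⟨hr, hru⟩
    rw [ENNReal.div_lt_iff (Or.inl (ENNReal.ofReal_pos.2 hφpos).ne')
      (Or.inl ENNReal.ofReal_ne_top)] at hdiv
    exact hdiv.le
  have hEeq : (⋃ n, En n) = E := subset_antisymm (iUnion_subset hEnE) hEsub
  have hμE : μ E = ⨆ n, μ (En n) := by
    rw [← hEeq]; exact (hmono.directed_le).measure_iUnion
  -- singletons of points in En have measure zero
  have hsingle : ∀ n, ∀ x ∈ En n, μ {x} = 0 := by
    intro n x hx
    have h2 : Tendsto (fun r : ℝ => 2 * r) (nhdsWithin 0 (Set.Ioi 0))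
        (nhdsWithin 0 (Set.Ioi 0)) := by
      rw [tendsto_nhdsWithin_iff]
      constructor
      · have h0 : Tendsto (fun r : ℝ => 2 * r) (nhds 0) (nhds (2 * 0)) :=
          ((continuous_const.mul continuous_id).tendsto 0 : _)
        simpa using h0.mono_left nhdsWithin_le_nhds
      · filter_upwards [self_mem_nhdsWithin] with r hr
        exact mul_pos two_pos (mem_Ioi.1 hr)
    have hg : Tendsto (fun r : ℝ => ENNReal.ofReal (2 * K) * ENNReal.ofReal (φ (2 * r)))
        (nhdsWithin 0 (Set.Ioi 0)) (nhds 0) := by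
      have h1 : Tendsto (fun r : ℝ => ENNReal.ofReal (φ (2 * r)))
          (nhdsWithin 0 (Set.Ioi 0)) (nhds 0) := by
        have := (ENNReal.continuous_ofReal.tendsto 0).comp (hφ0.comp h2)
        simpa [Function.comp_def] using this
      have := ENNReal.Tendsto.const_mul (a := ENNReal.ofReal (2 * K)) h1 (Or.inr ENNReal.ofReal_ne_top)
      simpa using this
    refine le_antisymm ?_ zero_le
    refine ge_of_tendsto hg ?_
    have hIoo : Set.Ioo (0:ℝ) (1/(n+1)) ∈ nhdsWithin (0:ℝ) (Set.Ioi 0) :=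
      Ioo_mem_nhdsGT_of_mem ⟨le_refl _, by positivity⟩
    filter_upwards [hIoo] with r hr
    exact le_trans (measure_mono (Set.singleton_subset_iff.2 (Metric.mem_ball_self hr.1)))
      (hx.2 r hr.1 hr.2.le)
  -- key estimate per n
  have hkey : ∀ n : ℕ, ENNReal.ofReal (c₂ / K) * μ (En n) ≤
      Measure.mkMetric m E := by
    intro n
    have hsub : Measure.mkMetric m (En n) ≤ Measure.mkMetric m E :=
      measure_mono (hEnE n)
    refine le_trans ?_ hsub
    rw [Measure.mkMetric_apply]
    set ρ : ℝ := min (1 / (2 * (n + 1))) (δ / 8) with hρ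
    have hρpos : 0 < ρ := lt_min (by positivity) (by positivity)
    refine le_iSup₂_of_le (ENNReal.ofReal ρ) (ENNReal.ofReal_pos.2 hρpos) ?_
    refine le_iInf fun t => le_iInf fun hcov => le_iInf fun hdiam => ?_
    -- per-piece estimate
    have hpiece : ∀ i : ℕ, μ (t i ∩ En n) ≤
        (ENNReal.ofReal (2 * K) * (ENNReal.ofReal c₁ * ENNReal.ofReal c₁)) *
          ⨆ _ : (t i).Nonempty, m (EMetric.diam (t i)) := by
      intro i
      rcases Set.eq_empty_or_nonempty (t i ∩ En n) with he | ⟨x, hxt, hxE⟩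
      · simp [he]
      have hne : (t i).Nonempty := ⟨x, hxt⟩
      rw [iSup_pos hne]
      have hdne : EMetric.diam (t i) ≠ ⊤ :=
        ne_top_of_le_ne_top ENNReal.ofReal_ne_top (hdiam i)
      set D : ℝ := (EMetric.diam (t i)).toReal with hD
      have hDρ : D ≤ ρ := by
        have := ENNReal.toReal_mono ENNReal.ofReal_ne_top (hdiam i)
        rwa [ENNReal.toReal_ofReal hρpos.le] at this
      rcases eq_or_lt_of_le (show (0:ℝ≥0∞) ≤ EMetric.diam (t i) from zero_le) with hzero | hpos
      · -- diameter zero: t i is a subsingleton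
        have hsub : t i ⊆ {x} := fun y hy =>
          (EMetric.diam_eq_zero_iff.1 hzero.symm) hy hxt
        calc μ (t i ∩ En n) ≤ μ {x} :=
              measure_mono (fun y hy => hsub hy.1)
          _ = 0 := hsingle n x hxE
          _ ≤ _ := zero_le
      · -- positive diameter
        have hDpos : 0 < D := ENNReal.toReal_pos hpos.ne' hdne
        have hball : t i ⊆ Metric.ball x (2 * D) := by
          intro y hy
          have h1 : edist y x ≤ EMetric.diam (t i) := EMetric.edist_le_diam_of_mem hy hxt
          have h2 : dist y x ≤ D := by
            rw [dist_edist]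
            exact ENNReal.toReal_mono hdne h1
          exact Metric.mem_ball.2 (lt_of_le_of_lt h2 (by linarith))
        have hr1 : 2 * D ≤ 1 / (n + 1) := by
          have h := hDρ.trans (min_le_left _ _)
          have hn1 : (0:ℝ) < (n:ℝ) + 1 := by positivity
          rw [le_div_iff₀ (by positivity)] at h
          rw [le_div_iff₀ hn1]
          nlinarith
        have hDδ : D ≤ δ / 8 := hDρ.trans (min_le_right _ _)
        have hmeas : μ (t i ∩ En n) ≤ ENNReal.ofReal (2 * K) * ENNReal.ofReal (φ (4 * D)) := by
          have := hxE.2 (2 * D) (by linarith) hr1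
          calc μ (t i ∩ En n) ≤ μ (Metric.ball x (2 * D)) :=
                measure_mono (fun y hy => hball hy.1)
            _ ≤ ENNReal.ofReal (2 * K) * ENNReal.ofReal (φ (2 * (2 * D))) := this
            _ = ENNReal.ofReal (2 * K) * ENNReal.ofReal (φ (4 * D)) := by ring_nf
        have hdoub : φ (4 * D) ≤ c₁ * (c₁ * φ D) := by
          have h1 : φ (2 * (2 * D)) ≤ c₁ * φ (2 * D) := hφdoub (2 * D) (by linarith) (by linarith)
          have h2 : φ (2 * D) ≤ c₁ * φ D := hφdoub D hDpos (by linarith)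
          have : (4:ℝ) * D = 2 * (2 * D) := by ring
          rw [this]
          calc φ (2 * (2 * D)) ≤ c₁ * φ (2 * D) := h1
            _ ≤ c₁ * (c₁ * φ D) := by nlinarith
        calc μ (t i ∩ En n) ≤ ENNReal.ofReal (2 * K) * ENNReal.ofReal (φ (4 * D)) := hmeas
          _ ≤ ENNReal.ofReal (2 * K) * (ENNReal.ofReal c₁ * (ENNReal.ofReal c₁ *
              ENNReal.ofReal (φ D))) := by
            gcongr
            rw [← ENNReal.ofReal_mul hc₁.le, ← ENNReal.ofReal_mul hc₁.le]
            exact ENNReal.ofReal_le_ofReal hdoub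
          _ = (ENNReal.ofReal (2 * K) * (ENNReal.ofReal c₁ * ENNReal.ofReal c₁)) *
              m (EMetric.diam (t i)) := by rw [hm]; ring
    -- sum up
    have hsum : μ (En n) ≤ (ENNReal.ofReal (2 * K) * (ENNReal.ofReal c₁ * ENNReal.ofReal c₁)) *
        ∑' i, ⨆ _ : (t i).Nonempty, m (EMetric.diam (t i)) := by
      calc μ (En n) ≤ μ (⋃ i, t i ∩ En n) := by
            refine measure_mono fun x hx => ?_
            rcases mem_iUnion.1 (hcov hx) with ⟨i, hi⟩
            exact mem_iUnion.2 ⟨i, hi, hx⟩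
        _ ≤ ∑' i, μ (t i ∩ En n) := measure_iUnion_le _
        _ ≤ ∑' i, (ENNReal.ofReal (2 * K) * (ENNReal.ofReal c₁ * ENNReal.ofReal c₁)) *
              ⨆ _ : (t i).Nonempty, m (EMetric.diam (t i)) := ENNReal.tsum_le_tsum hpiece
        _ = _ := ENNReal.tsum_mul_left
    calc ENNReal.ofReal (c₂ / K) * μ (En n)
        ≤ ENNReal.ofReal (c₂ / K) *
          ((ENNReal.ofReal (2 * K) * (ENNReal.ofReal c₁ * ENNReal.ofReal c₁)) *
            ∑' i, ⨆ _ : (t i).Nonempty, m (EMetric.diam (t i))) := by gcongr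
      _ = (ENNReal.ofReal (c₂ / K) * ENNReal.ofReal (2 * K) * ENNReal.ofReal c₁ *
            ENNReal.ofReal c₁) * ∑' i, ⨆ _ : (t i).Nonempty, m (EMetric.diam (t i)) := by ring
      _ = ∑' i, ⨆ _ : (t i).Nonempty, m (EMetric.diam (t i)) := by
          rw [← ENNReal.ofReal_mul (by positivity), ← ENNReal.ofReal_mul (by positivity),
            ← ENNReal.ofReal_mul (by positivity)]
          have : c₂ / K * (2 * K) * c₁ * c₁ = 1 := by
            rw [hc₂]; field_simp
          rw [this, ENNReal.ofReal_one, one_mul]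
  rw [hμE, ENNReal.mul_iSup]
  exact iSup_le hkey
end
end

section
/- Assume d > Q (with d a positive integer). Then there exists a finite constant c > 0 such that for all 0 < r < 1: ∫_{[0,1]^N} min{1, r^d / ρ(0,t)^d} dt ≤ c r^Q. (This is the key deterministic estimate behind the sojourn-time moment bound E[T(r)] ≤ c r^Q.) -/
open MeasureTheory Filter
open scoped ENNReal NNReal

noncomputable section

/-- The key deterministic estimate behind `E[T(r)] ≤ c r^Q`: if `d > Q` then
`∫_{[0,1]^N} min{1, r^d / ρ(0,t)^d} dt ≤ c r^Q` for all `0 < r < 1`. -/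
theorem sojourn_integral_estimate
    {N : ℕ} (hN : 0 < N) (H : Fin N → ℝ) (hH : ∀ j, H j ∈ Set.Ioo (0 : ℝ) 1)
    (d : ℕ) (hd : 0 < d) (hdQ : Qof H < d) :
    ∃ c : ℝ, 0 < c ∧ ∀ r : ℝ, 0 < r → r < 1 →
      ∫ t in {t : ESp N | ∀ j, t j ∈ Set.Icc (0 : ℝ) 1},
          min 1 (r ^ d / rho H 0 t ^ d) ∂volume ≤ c * r ^ Qof H := by
  have hHpos : ∀ j, 0 < H j := fun j => (hH j).1
  have : Nonempty (Fin N) := ⟨⟨0, hN⟩⟩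
  have hQpos : 0 < Qof H :=
    Finset.sum_pos (fun j _ => inv_pos.mpr (hHpos j)) Finset.univ_nonempty
  have hdpos : (0 : ℝ) < d := Nat.cast_pos.mpr hd
  set a : ℝ := Qof H / d with ha_def
  have ha0 : 0 < a := div_pos hQpos hdpos
  have ha1 : a < 1 := (div_lt_one hdpos).mpr hdQ
  refine ⟨1 / (1 - a), div_pos one_pos (by linarith), fun r hr hr1 => ?_⟩
  set cube : Set (ESp N) := {t : ESp N | ∀ j, t j ∈ Set.Icc (0 : ℝ) 1} with hcube_def
  set f : ESp N → ℝ := fun t => min 1 (r ^ d / rho H 0 t ^ d) with hf_def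
  -- basic facts
  have hrho_nonneg : ∀ t : ESp N, 0 ≤ rho H 0 t := fun t =>
    Finset.sum_nonneg fun j _ => Real.rpow_nonneg (abs_nonneg _) _
  have hrho_meas : Measurable (rho H 0) := by
    apply Finset.measurable_sum
    intro j _
    exact (Real.continuous_rpow_const (hHpos j).le).measurable.comp
      ((measurable_const.sub (by fun_prop)).abs)
  have hfm : Measurable f :=
    measurable_const.min (measurable_const.div (hrho_meas.pow_const d))
  have hf_nn : ∀ t, 0 ≤ f t := fun t =>
    le_min zero_le_one (div_nonneg (pow_nonneg hr.le d) (pow_nonneg (hrho_nonneg t) d))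
  have hf_le_one : ∀ t, f t ≤ 1 := fun t => min_le_left _ _
  -- pass to lintegral
  rw [integral_eq_lintegral_of_nonneg_ae (ae_of_all _ hf_nn) hfm.aestronglyMeasurable]
  -- layer cake
  rw [lintegral_eq_lintegral_meas_lt _ (ae_of_all _ hf_nn) hfm.aemeasurable]
  set μ := volume.restrict cube with hμ_def
  -- the key measure bound
  have key : ∀ s ∈ Set.Ioo (0:ℝ) 1,
      μ {t : ESp N | s < f t} ≤ ENNReal.ofReal (r ^ Qof H * s ^ (-a)) := by
    intro s hs
    set R : ℝ := r * s ^ (-(1 / (d:ℝ))) with hR_def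
    have hR : 0 < R := mul_pos hr (Real.rpow_pos_of_pos hs.1 _)
    have hsub : {t : ESp N | s < f t} ∩ cube
        ⊆ {x : ESp N | ∀ j, x j ∈ Set.Icc 0 (R ^ (H j)⁻¹)} := by
      rintro t ⟨hts, htc⟩
      have hts' : s < r ^ d / rho H 0 t ^ d := lt_of_lt_of_le hts (min_le_right _ _)
      have hρpos : 0 < rho H 0 t := by
        rcases eq_or_lt_of_le (hrho_nonneg t) with h | h
        · exfalso
          rw [← h] at hts'
          simp [zero_pow hd.ne'] at hts'
          exact absurd (hts'.trans_le le_rfl) (not_lt.mpr hs.1.le)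
        · exact h
      have hρd : 0 < rho H 0 t ^ d := pow_pos hρpos d
      have h1 : rho H 0 t ^ d < r ^ d / s := by
        rw [lt_div_iff₀ hs.1]
        calc rho H 0 t ^ d * s = s * rho H 0 t ^ d := mul_comm _ _
          _ < r ^ d := (lt_div_iff₀ hρd).mp hts'
      have hRd : R ^ d = r ^ d / s := by
        rw [hR_def, mul_pow, ← Real.rpow_natCast (s ^ (-(1/(d:ℝ)))) d,
          ← Real.rpow_mul hs.1.le]
        have : -(1/(d:ℝ)) * d = -1 := by field_simp
        rw [this, Real.rpow_neg_one, div_eq_mul_inv]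
      have hρR : rho H 0 t < R := by
        rw [← pow_lt_pow_iff_left₀ (hrho_nonneg t) hR.le hd.ne']
        rw [hRd]; exact h1
      intro j
      have htj : t j ∈ Set.Icc (0:ℝ) 1 := htc j
      have hterm : t j ^ (H j) ≤ rho H 0 t := by
        have h0 : |(0 : ESp N) j - t j| ^ (H j) = t j ^ (H j) := by
          have hz : (0 : ESp N) j = 0 := rfl
          rw [hz, zero_sub, abs_neg, abs_of_nonneg htj.1]
        rw [rho, ← h0]
        exact Finset.single_le_sum (f := fun i => |(0 : ESp N) i - t i| ^ (H i))
          (fun i _ => Real.rpow_nonneg (abs_nonneg _) _) (Finset.mem_univ j)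
      have htR : t j ^ (H j) < R := lt_of_le_of_lt hterm hρR
      have : t j < R ^ (H j)⁻¹ := by
        have h2 : (t j ^ (H j)) ^ (H j)⁻¹ < R ^ (H j)⁻¹ :=
          Real.rpow_lt_rpow (Real.rpow_nonneg htj.1 _) htR (inv_pos.mpr (hHpos j))
        rwa [← Real.rpow_mul htj.1, mul_inv_cancel₀ (hHpos j).ne', Real.rpow_one] at h2
      exact ⟨htj.1, this.le⟩
    have hbox : volume {x : ESp N | ∀ j, x j ∈ Set.Icc 0 (R ^ (H j)⁻¹)}
        = ENNReal.ofReal (r ^ Qof H * s ^ (-a)) := by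
      have heq : {x : ESp N | ∀ j, x j ∈ Set.Icc 0 (R ^ (H j)⁻¹)}
          = (MeasurableEquiv.toLp 2 (Fin N → ℝ)).symm ⁻¹'
            (Set.univ.pi fun j => Set.Icc 0 (R ^ (H j)⁻¹)) := by
        ext x; simp only [Set.mem_setOf_eq, Set.mem_preimage, Set.mem_univ_pi]; rfl
      rw [heq, (EuclideanSpace.volume_preserving_symm_measurableEquiv_toLp (Fin N)).measure_preimage
        (MeasurableSet.univ_pi fun j => measurableSet_Icc).nullMeasurableSet,
        volume_pi_pi]
      have : ∀ j : Fin N, volume (Set.Icc (0:ℝ) (R ^ (H j)⁻¹))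
          = ENNReal.ofReal (R ^ (H j)⁻¹) := by
        intro j; rw [Real.volume_Icc, sub_zero]
      simp_rw [this]
      rw [← ENNReal.ofReal_prod_of_nonneg (fun j _ => Real.rpow_nonneg hR.le _)]
      congr 1
      rw [← Real.rpow_sum_of_pos hR]
      show R ^ Qof H = _
      rw [hR_def, Real.mul_rpow hr.le (Real.rpow_nonneg hs.1.le _),
        ← Real.rpow_mul hs.1.le]
      congr 1
      rw [ha_def]; field_simp
    have hmeas : MeasurableSet {t : ESp N | s < f t} :=
      measurableSet_lt measurable_const hfm
    rw [hμ_def, Measure.restrict_apply hmeas]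
    calc volume ({t : ESp N | s < f t} ∩ cube)
        ≤ volume {x : ESp N | ∀ j, x j ∈ Set.Icc 0 (R ^ (H j)⁻¹)} := measure_mono hsub
      _ = ENNReal.ofReal (r ^ Qof H * s ^ (-a)) := hbox
  -- vanishing for s ≥ 1
  have hzero : ∀ s ∈ Set.Ici (1:ℝ), μ {t : ESp N | s < f t} = 0 := by
    intro s hs
    have : {t : ESp N | s < f t} = ∅ := by
      ext t; simp only [Set.mem_setOf_eq, Set.mem_empty_iff_false, iff_false, not_lt]
      exact (hf_le_one t).trans hs
    rw [this]; exact measure_empty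
  -- split the integral
  have hsplit : ∫⁻ s in Set.Ioi (0:ℝ), μ {t : ESp N | s < f t}
      ≤ ∫⁻ s in Set.Ioo (0:ℝ) 1, ENNReal.ofReal (r ^ Qof H * s ^ (-a)) := by
    rw [← Set.Ioo_union_Ici_eq_Ioi (zero_lt_one' ℝ), lintegral_union measurableSet_Ici
      (Set.disjoint_left.mpr fun x hx hx' => absurd hx.2 (not_lt.mpr hx'))]
    have h2 : ∫⁻ s in Set.Ici (1:ℝ), μ {t : ESp N | s < f t} = 0 := by
      rw [setLIntegral_congr_fun_ae measurableSet_Ici (ae_of_all _ hzero)]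
      simp
    rw [h2, add_zero]
    exact setLIntegral_mono' measurableSet_Ioo key
  have hInt : IntegrableOn (fun s : ℝ => r ^ Qof H * s ^ (-a)) (Set.Ioo 0 1) := by
    apply Integrable.const_mul
    have h := intervalIntegral.intervalIntegrable_rpow' (a := 0) (b := 1)
      (r := -a) (by linarith)
    rw [intervalIntegrable_iff_integrableOn_Ioo_of_le zero_le_one] at h
    exact h
  have hval : ∫ s in Set.Ioo (0:ℝ) 1, r ^ Qof H * s ^ (-a)
      = r ^ Qof H * (1 / (1 - a)) := by
    rw [MeasureTheory.integral_const_mul]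
    congr 1
    rw [← integral_Ioc_eq_integral_Ioo, ← intervalIntegral.integral_of_le zero_le_one,
      integral_rpow (Or.inl (by linarith : (-1:ℝ) < -a))]
    rw [Real.one_rpow, Real.zero_rpow (by linarith : -a + 1 ≠ 0)]
    rw [neg_add_eq_sub, one_div]
    ring
  have hfin : ∫⁻ s in Set.Ioo (0:ℝ) 1, ENNReal.ofReal (r ^ Qof H * s ^ (-a))
      = ENNReal.ofReal (r ^ Qof H * (1 / (1 - a))) := by
    rw [← ofReal_integral_eq_lintegral_ofReal hInt
      ((ae_restrict_iff' measurableSet_Ioo).mpr (ae_of_all _ fun s hs =>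
        mul_nonneg (Real.rpow_nonneg hr.le _) (Real.rpow_nonneg hs.1.le _))), hval]
  calc (∫⁻ s in Set.Ioi (0:ℝ), μ {t : ESp N | s < f t}).toReal
      ≤ (ENNReal.ofReal (r ^ Qof H * (1 / (1 - a)))).toReal := by
        apply ENNReal.toReal_mono ENNReal.ofReal_ne_top
        rw [← hfin]; exact hsplit
    _ = r ^ Qof H * (1 / (1 - a)) := ENNReal.toReal_ofReal
        (mul_nonneg (Real.rpow_nonneg hr.le _)
          (le_of_lt (div_pos one_pos (by linarith))))
    _ = 1 / (1 - a) * r ^ Qof H := mul_comm _ _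
end
end
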